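/- Suppose M(G_0) = 1, M(G_2) = 120, M(G_4) = 455, and M(G_6) ≤ 402, where G_i is the subgraph of G_16 induced on even-weight strings of Hamming weight i < 8. Then every independent set of G_16 has size at most 4·(1 + 120 + 455 + 402) = 3912 < 4096, and hence χ(G_16) > 16. -/

import Mathlib

/-- The graph `G_16` on 16-bit strings, with edges at Hamming distance 8. -/
def G16 : SimpleGraph (Fin 16 → Bool) where
  Adj u v := hammingDist u v = 8
  symm := ⟨fun u v h => by simpa [hammingDist_comm] using h⟩
  loopless := ⟨fun u h => by simp [hammingDist_self] at h⟩

/-- The Hamming weight of a bit string. -/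
def wt {N : ℕ} (v : Fin N → Bool) : ℕ :=
  (Finset.univ.filter (fun i => v i = true)).card

/-- A finite set of vertices is independent if no two of its members are adjacent. -/
def IsIndep {V : Type*} (G : SimpleGraph V) (s : Finset V) : Prop :=
  ∀ u ∈ s, ∀ v ∈ s, ¬ G.Adj u v

abbrev V16 := Fin 16 → Bool

lemma adj_iff (u v : V16) : G16.Adj u v ↔ hammingDist u v = 8 := Iff.rfl

lemma dist_def (u v : V16) :
    hammingDist u v = (Finset.univ.filter fun i => u i ≠ v i).card := rfl

lemma wt_le (v : V16) : wt v ≤ 16 :=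
  (Finset.card_filter_le _ _).trans (by simp)

def xr (a v : V16) : V16 := fun i => xor (a i) (v i)

lemma xr_invol (a : V16) : Function.Involutive (xr a) := by
  intro v; funext i; cases a i <;> simp [xr]

lemma dist_xr (a u v : V16) : hammingDist (xr a u) (xr a v) = hammingDist u v := by
  rw [dist_def, dist_def]
  congr 1
  apply Finset.filter_congr
  intro i _
  simp only [xr]
  cases a i <;> cases u i <;> cases v i <;> simp

def cpl (v : V16) : V16 := fun i => !(v i)

lemma cpl_invol : Function.Involutive cpl := by
  intro v; funext i; simp [cpl]

lemma dist_cpl_cpl (u v : V16) : hammingDist (cpl u) (cpl v) = hammingDist u v := by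
  rw [dist_def, dist_def]
  congr 1
  apply Finset.filter_congr
  intro i _
  simp only [cpl]
  cases u i <;> cases v i <;> simp

lemma wt_cpl (v : V16) : wt (cpl v) + wt v = 16 := by
  unfold wt
  have h : (Finset.univ.filter fun i => cpl v i = true)
      = Finset.univ.filter fun i => ¬ (v i = true) := by
    apply Finset.filter_congr; intro i _; simp only [cpl]; cases v i <;> simp
  rw [h, Finset.filter_not, Finset.card_sdiff_of_subset (Finset.filter_subset _ _)]
  have := Finset.card_filter_le (Finset.univ : Finset (Fin 16)) (fun i => v i = true)
  simp only [Finset.card_univ, Fintype.card_fin] at *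
  omega

lemma wt_xr (a v : V16) : wt (xr a v) = hammingDist a v := by
  rw [dist_def]; unfold wt
  congr 1
  apply Finset.filter_congr
  intro i _
  simp only [xr]
  cases a i <;> cases v i <;> simp

lemma wt_add_wt (u v : V16) : ∃ k, wt u + wt v = hammingDist u v + 2 * k := by
  classical
  set A := Finset.univ.filter (fun i => u i = true) with hA
  set B := Finset.univ.filter (fun i => v i = true) with hB
  have hD : (Finset.univ.filter fun i => u i ≠ v i) = (A ∪ B) \ (A ∩ B) := by
    ext i
    simp only [hA, hB, Finset.mem_filter, Finset.mem_sdiff, Finset.mem_union,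
      Finset.mem_inter, Finset.mem_univ, true_and]
    cases u i <;> cases v i <;> simp
  have h1 := Finset.card_union_add_card_inter A B
  have h3 : (A ∩ B).card ≤ (A ∪ B).card :=
    Finset.card_le_card Finset.inter_subset_union
  refine ⟨(A ∩ B).card, ?_⟩
  have hd : hammingDist u v = ((A ∪ B) \ (A ∩ B)).card := by rw [dist_def, hD]
  rw [Finset.card_sdiff_of_subset Finset.inter_subset_union] at hd
  show A.card + B.card = _
  omega

lemma indep_subset {S T : Finset V16} (hST : S ⊆ T) (h : IsIndep G16 T) :
    IsIndep G16 S := fun u hu v hv => h u (hST hu) v (hST hv)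

lemma indep_image_cpl {S : Finset V16} (h : IsIndep G16 S) :
    IsIndep G16 (S.image cpl) := by
  intro u hu v hv
  obtain ⟨x, hx, rfl⟩ := Finset.mem_image.1 hu
  obtain ⟨y, hy, rfl⟩ := Finset.mem_image.1 hv
  rw [adj_iff, dist_cpl_cpl]
  exact h x hx y hy

lemma indep_image_xr (a : V16) {S : Finset V16} (h : IsIndep G16 S) :
    IsIndep G16 (S.image (xr a)) := by
  intro u hu v hv
  obtain ⟨x, hx, rfl⟩ := Finset.mem_image.1 hu
  obtain ⟨y, hy, rfl⟩ := Finset.mem_image.1 hv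
  rw [adj_iff, dist_xr]
  exact h x hx y hy

lemma layer {w m : ℕ}
    (h : IsGreatest {k : ℕ | ∃ I : Finset V16,
      (∀ v ∈ I, wt v = w) ∧ IsIndep G16 I ∧ I.card = k} m)
    {I : Finset V16} (hw : ∀ v ∈ I, wt v = w) (hi : IsIndep G16 I) :
    I.card ≤ m :=
  h.2 ⟨I, hw, hi, rfl⟩

lemma reflect {m w : ℕ}
    (hb : ∀ I : Finset V16, (∀ v ∈ I, wt v = w) → IsIndep G16 I → I.card ≤ m)
    {S : Finset V16} (hw : ∀ v ∈ S, wt v + w = 16) (hi : IsIndep G16 S) :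
    S.card ≤ m := by
  rw [← Finset.card_image_of_injOn (cpl_invol.injective.injOn)]
  apply hb
  · intro v hv
    obtain ⟨x, hx, rfl⟩ := Finset.mem_image.1 hv
    have h1 := wt_cpl x
    have h2 := hw x hx
    omega
  · exact indep_image_cpl hi

lemma core
    (h0 : ∀ I : Finset V16, (∀ v ∈ I, wt v = 0) → IsIndep G16 I → I.card ≤ 1)
    (h2 : ∀ I : Finset V16, (∀ v ∈ I, wt v = 2) → IsIndep G16 I → I.card ≤ 120)
    (h4 : ∀ I : Finset V16, (∀ v ∈ I, wt v = 4) → IsIndep G16 I → I.card ≤ 455)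
    (h6 : ∀ I : Finset V16, (∀ v ∈ I, wt v = 6) → IsIndep G16 I → I.card ≤ 402)
    {S : Finset V16} (hi : IsIndep G16 S)
    (hev : ∀ v ∈ S, Even (wt v)) (h8 : ∀ v ∈ S, wt v ≠ 8) :
    S.card ≤ 1956 := by
  classical
  set L : Finset ℕ := {0, 2, 4, 6, 10, 12, 14, 16} with hL
  set f : ℕ → Finset V16 := fun w => S.filter (fun v => wt v = w) with hf
  have hsub : S ⊆ L.biUnion f := by
    intro v hv
    refine Finset.mem_biUnion.2 ⟨wt v, ?_, Finset.mem_filter.2 ⟨hv, rfl⟩⟩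
    have l1 := wt_le v
    obtain ⟨k, hk⟩ := hev v hv
    have l3 := h8 v hv
    simp only [hL, Finset.mem_insert, Finset.mem_singleton]
    omega
  have hlow : ∀ w m, (∀ I : Finset V16, (∀ v ∈ I, wt v = w) → IsIndep G16 I → I.card ≤ m) →
      (f w).card ≤ m := by
    intro w m hm
    exact hm _ (fun v hv => (Finset.mem_filter.1 hv).2)
      (indep_subset (Finset.filter_subset _ _) hi)
  have hhigh : ∀ w m, w + 16 ≤ 32 →
      (∀ I : Finset V16, (∀ v ∈ I, wt v = 16 - w) → IsIndep G16 I → I.card ≤ m) →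
      (f w).card ≤ m := by
    intro w m hw16 hm
    refine reflect hm ?_ (indep_subset (Finset.filter_subset _ _) hi)
    intro v hv
    have := (Finset.mem_filter.1 hv).2
    have := wt_le v
    omega
  calc S.card ≤ (L.biUnion f).card := Finset.card_le_card hsub
    _ ≤ ∑ w ∈ L, (f w).card := Finset.card_biUnion_le
    _ ≤ 1956 := by
        have b0 := hlow 0 1 h0
        have b2 := hlow 2 120 h2
        have b4 := hlow 4 455 h4
        have b6 := hlow 6 402 h6
        have b10 := hhigh 10 402 (by norm_num) h6
        have b12 := hhigh 12 455 (by norm_num) h4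
        have b14 := hhigh 14 120 (by norm_num) h2
        have b16 := hhigh 16 1 (by norm_num) h0
        have : ∑ w ∈ L, (f w).card
            = (f 0).card + (f 2).card + (f 4).card + (f 6).card
              + (f 10).card + (f 12).card + (f 14).card + (f 16).card := by
          simp only [hL]
          rw [Finset.sum_insert (by decide), Finset.sum_insert (by decide),
            Finset.sum_insert (by decide), Finset.sum_insert (by decide),
            Finset.sum_insert (by decide), Finset.sum_insert (by decide),
            Finset.sum_insert (by decide), Finset.sum_singleton]
          ring
        omega

lemma shifted_bound
    (h0 : ∀ I : Finset V16, (∀ v ∈ I, wt v = 0) → IsIndep G16 I → I.card ≤ 1)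
    (h2 : ∀ I : Finset V16, (∀ v ∈ I, wt v = 2) → IsIndep G16 I → I.card ≤ 120)
    (h4 : ∀ I : Finset V16, (∀ v ∈ I, wt v = 4) → IsIndep G16 I → I.card ≤ 455)
    (h6 : ∀ I : Finset V16, (∀ v ∈ I, wt v = 6) → IsIndep G16 I → I.card ≤ 402)
    {S : Finset V16} (hi : IsIndep G16 S)
    (hpar : ∀ u ∈ S, ∀ v ∈ S, Even (hammingDist u v)) :
    S.card ≤ 1956 := by
  rcases S.eq_empty_or_nonempty with rfl | ⟨v0, hv0⟩
  · simp
  rw [← Finset.card_image_of_injOn ((xr_invol v0).injective.injOn)]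
  refine core h0 h2 h4 h6 (indep_image_xr v0 hi) ?_ ?_
  · intro v hv
    obtain ⟨x, hx, rfl⟩ := Finset.mem_image.1 hv
    rw [wt_xr]
    exact hpar v0 hv0 x hx
  · intro v hv
    obtain ⟨x, hx, rfl⟩ := Finset.mem_image.1 hv
    rw [wt_xr]
    intro hd
    exact hi v0 hv0 x hx hd

/-- If `M(G_0) = 1`, `M(G_2) = 120`, `M(G_4) = 455`, and `M(G_6) ≤ 402`, where
`G_i` is the subgraph of `G_16` induced on strings of Hamming weight `i`, then
every independent set of `G_16` has size at most `4·(1+120+455+402) = 3912`,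
and hence `χ(G_16) > 16`. -/
theorem indep_number_G16_le_3912
    (h0 : IsGreatest {k : ℕ | ∃ I : Finset (Fin 16 → Bool),
      (∀ v ∈ I, wt v = 0) ∧ IsIndep G16 I ∧ I.card = k} 1)
    (h2 : IsGreatest {k : ℕ | ∃ I : Finset (Fin 16 → Bool),
      (∀ v ∈ I, wt v = 2) ∧ IsIndep G16 I ∧ I.card = k} 120)
    (h4 : IsGreatest {k : ℕ | ∃ I : Finset (Fin 16 → Bool),
      (∀ v ∈ I, wt v = 4) ∧ IsIndep G16 I ∧ I.card = k} 455)
    (h6 : ∀ I : Finset (Fin 16 → Bool),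
      (∀ v ∈ I, wt v = 6) → IsIndep G16 I → I.card ≤ 402) :
    (∀ I : Finset (Fin 16 → Bool), IsIndep G16 I → I.card ≤ 3912) ∧
      16 < G16.chromaticNumber := by
  classical
  have b0 : ∀ I : Finset V16, (∀ v ∈ I, wt v = 0) → IsIndep G16 I → I.card ≤ 1 :=
    fun I hw hi => layer h0 hw hi
  have b2 : ∀ I : Finset V16, (∀ v ∈ I, wt v = 2) → IsIndep G16 I → I.card ≤ 120 :=
    fun I hw hi => layer h2 hw hi
  have b4 : ∀ I : Finset V16, (∀ v ∈ I, wt v = 4) → IsIndep G16 I → I.card ≤ 455 :=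
    fun I hw hi => layer h4 hw hi
  have main : ∀ I : Finset (Fin 16 → Bool), IsIndep G16 I → I.card ≤ 3912 := by
    intro I hI
    have hsplit := Finset.card_filter_add_card_filter_not
      (s := I) (p := fun v => Even (wt v))
    have he : (I.filter (fun v => Even (wt v))).card ≤ 1956 := by
      refine shifted_bound b0 b2 b4 h6
        (indep_subset (Finset.filter_subset _ _) hI) ?_
      intro u hu v hv
      obtain ⟨k, hk⟩ := wt_add_wt u v
      obtain ⟨a, ha⟩ := (Finset.mem_filter.1 hu).2
      obtain ⟨b, hb⟩ := (Finset.mem_filter.1 hv).2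
      rw [Nat.even_iff]
      omega
    have ho : (I.filter (fun v => ¬ Even (wt v))).card ≤ 1956 := by
      refine shifted_bound b0 b2 b4 h6
        (indep_subset (Finset.filter_subset _ _) hI) ?_
      intro u hu v hv
      obtain ⟨k, hk⟩ := wt_add_wt u v
      have ha := Nat.not_even_iff.1 (Finset.mem_filter.1 hu).2
      have hb := Nat.not_even_iff.1 (Finset.mem_filter.1 hv).2
      rw [Nat.even_iff]
      omega
    omega
  refine ⟨main, ?_⟩
  have hnc : ¬ G16.Colorable 16 := by
    rintro ⟨C⟩
    have hfib : ∀ c : Fin 16,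
        ((Finset.univ : Finset V16).filter (fun v => C v = c)).card ≤ 3912 := by
      intro c
      apply main
      intro u hu v hv hadj
      exact C.valid hadj (by
        rw [(Finset.mem_filter.1 hu).2, (Finset.mem_filter.1 hv).2])
    have hcov : (Finset.univ : Finset V16).card
        ≤ ∑ c : Fin 16, ((Finset.univ : Finset V16).filter (fun v => C v = c)).card := by
      calc (Finset.univ : Finset V16).card
          ≤ ((Finset.univ : Finset (Fin 16)).biUnion
              fun c => (Finset.univ : Finset V16).filter (fun v => C v = c)).card :=
            Finset.card_le_card (fun v _ => Finset.mem_biUnion.2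
              ⟨C v, Finset.mem_univ _, Finset.mem_filter.2 ⟨Finset.mem_univ _, rfl⟩⟩)
        _ ≤ _ := Finset.card_biUnion_le
    have hsum : ∑ c : Fin 16,
        ((Finset.univ : Finset V16).filter (fun v => C v = c)).card ≤ 16 * 3912 := by
      calc _ ≤ ∑ _c : Fin 16, 3912 := Finset.sum_le_sum (fun c _ => hfib c)
        _ = 16 * 3912 := by simp [Finset.sum_const]
    have huniv : (Finset.univ : Finset V16).card = 65536 := by
      simp [Finset.card_univ]
    omega
  refine lt_of_not_ge fun hle => hnc ?_
  exact SimpleGraph.chromaticNumber_le_iff_colorable.mp (by exact_mod_cast hle)
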